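/- For any x ∈ R^n, the normalized largest eigenvalue of the rank-one matrix xx^T equals the number of nonzero entries of x: λ'(xx^T) = |{i : x_i ≠ 0}|, where λ'(M) = max{ h^T M h : h^T Diag(M) h ≤ 1 }. -/

import Mathlib

open Finset Matrix BigOperators

/-- Normalized largest eigenvalue: `λ′(M) = sup { hᵀ M h : hᵀ Diag(M) h ≤ 1 }`. -/
noncomputable def lambdaPrime {n : ℕ} (M : Matrix (Fin n) (Fin n) ℝ) : ℝ :=
  sSup {r : ℝ | ∃ h : Fin n → ℝ,
    h ⬝ᵥ (Matrix.diagonal fun i => M i i).mulVec h ≤ 1 ∧ r = h ⬝ᵥ M.mulVec h}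

private lemma diagq {n : ℕ} (x h : Fin n → ℝ) :
    h ⬝ᵥ (Matrix.diagonal fun i => (Matrix.vecMulVec x x) i i).mulVec h
      = ∑ i, x i ^ 2 * h i ^ 2 := by
  simp [dotProduct, mulVec_diagonal, vecMulVec_apply]
  exact Finset.sum_congr rfl fun i _ => by ring

private lemma rankq {n : ℕ} (x h : Fin n → ℝ) :
    h ⬝ᵥ (Matrix.vecMulVec x x).mulVec h = (∑ i, x i * h i) ^ 2 := by
  simp [dotProduct, mulVec, vecMulVec_apply, Finset.mul_sum]
  rw [sq, Finset.sum_mul]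
  refine Finset.sum_congr rfl fun i _ => ?_
  rw [Finset.mul_sum]
  exact Finset.sum_congr rfl fun j _ => by ring

theorem lambdaPrime_rank_one {n : ℕ} (x : Fin n → ℝ) (hx : x ≠ 0) :
    lambdaPrime (Matrix.vecMulVec x x) =
      (Finset.univ.filter (fun i => x i ≠ 0)).card := by
  classical
  set s : Finset (Fin n) := Finset.univ.filter (fun i => x i ≠ 0) with hs
  set k : ℝ := (s.card : ℝ) with hkdef
  have hcard : 0 < s.card := by
    obtain ⟨i, hi⟩ := Function.ne_iff.mp hx
    have hi' : x i ≠ 0 := by simpa using hi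
    exact Finset.card_pos.mpr ⟨i, by simp [hs, hi']⟩
  have hk : 0 < k := by rw [hkdef]; exact_mod_cast hcard
  have hub : ∀ r ∈ {r : ℝ | ∃ h : Fin n → ℝ,
      h ⬝ᵥ (Matrix.diagonal fun i => (Matrix.vecMulVec x x) i i).mulVec h ≤ 1 ∧
      r = h ⬝ᵥ (Matrix.vecMulVec x x).mulVec h}, r ≤ k := by
    rintro r ⟨h, hle, rfl⟩
    rw [rankq]
    rw [diagq] at hle
    have hsum : (∑ i, x i * h i) = ∑ i ∈ s, x i * h i := by
      refine (Finset.sum_subset (Finset.subset_univ s) fun i _ hi => ?_).symm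
      simp only [hs, Finset.mem_filter, Finset.mem_univ, true_and, not_not] at hi
      simp [hi]
    rw [hsum]
    have hcs : (∑ i ∈ s, 1 * (x i * h i)) ^ 2 ≤
        (∑ i ∈ s, (1:ℝ) ^ 2) * ∑ i ∈ s, (x i * h i) ^ 2 :=
      Finset.sum_mul_sq_le_sq_mul_sq s 1 (fun i => x i * h i)
    simp only [one_mul, one_pow, Finset.sum_const, nsmul_eq_mul, mul_one] at hcs
    refine hcs.trans ?_
    have h1 : ∑ i ∈ s, (x i * h i) ^ 2 ≤ ∑ i, x i ^ 2 * h i ^ 2 := by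
      calc ∑ i ∈ s, (x i * h i) ^ 2 = ∑ i ∈ s, x i ^ 2 * h i ^ 2 :=
            Finset.sum_congr rfl fun i _ => by ring
        _ ≤ ∑ i, x i ^ 2 * h i ^ 2 :=
            Finset.sum_le_sum_of_subset_of_nonneg (Finset.subset_univ s)
              (fun i _ _ => by positivity)
    calc (s.card : ℝ) * ∑ i ∈ s, (x i * h i) ^ 2
        ≤ k * 1 := mul_le_mul_of_nonneg_left (h1.trans hle) hk.le
      _ = k := mul_one k
  have hmem : k ∈ {r : ℝ | ∃ h : Fin n → ℝ,
      h ⬝ᵥ (Matrix.diagonal fun i => (Matrix.vecMulVec x x) i i).mulVec h ≤ 1 ∧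
      r = h ⬝ᵥ (Matrix.vecMulVec x x).mulVec h} := by
    refine ⟨fun i => if x i = 0 then 0 else 1 / (x i * Real.sqrt k), ?_, ?_⟩
    · rw [diagq]
      have key : ∀ i, x i ^ 2 * (if x i = 0 then (0:ℝ) else 1 / (x i * Real.sqrt k)) ^ 2
          = if x i ≠ 0 then 1 / k else 0 := by
        intro i
        by_cases h0 : x i = 0 <;> simp [h0]
        rw [mul_pow, inv_pow, inv_pow, Real.sq_sqrt hk.le]
        field_simp
      simp only [key]
      rw [Finset.sum_ite, Finset.sum_const, Finset.sum_const, smul_zero, add_zero,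
        nsmul_eq_mul, ← hs, mul_one_div, ← hkdef, div_self hk.ne']
    · rw [rankq]
      have key : ∀ i, x i * (if x i = 0 then (0:ℝ) else 1 / (x i * Real.sqrt k))
          = if x i ≠ 0 then 1 / Real.sqrt k else 0 := by
        intro i
        by_cases h0 : x i = 0 <;> simp [h0]
        field_simp
      simp only [key]
      rw [Finset.sum_ite, Finset.sum_const, Finset.sum_const, smul_zero, add_zero,
        nsmul_eq_mul, ← hs, mul_one_div, div_pow, Real.sq_sqrt hk.le, ← hkdef,
        sq, mul_div_assoc, div_self hk.ne', mul_one]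
  have hne : {r : ℝ | ∃ h : Fin n → ℝ,
      h ⬝ᵥ (Matrix.diagonal fun i => (Matrix.vecMulVec x x) i i).mulVec h ≤ 1 ∧
      r = h ⬝ᵥ (Matrix.vecMulVec x x).mulVec h}.Nonempty := ⟨k, hmem⟩
  unfold lambdaPrime
  exact le_antisymm (csSup_le hne hub) (le_csSup ⟨k, hub⟩ hmem)
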